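/- arXiv:1706.06653 — 3 statements merged into one kernel-verified Lean document; each statement's English description precedes it below -/
import Mathlib

section
/- For 0 < q < 1, fixed nonnegative integers j_1 < j_2 < ... < j_m, and n ≥ m, the sum of q^{k_1+...+k_n} over all strictly increasing n-tuples 0 ≤ k_1 < ... < k_n of nonnegative integers whose underlying set contains {j_1,...,j_m} equals q^{j_1+...+j_m} times the coefficient of z^{n-m} in the power series ∏_{k=0}^∞ (1+q^k z) · ∏_{i=1}^m (1+q^{j_i} z)^{-1}. -/
open scoped BigOperators ENNReal NNReal

open Filter Finset

namespace Stmt1Helper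

lemma tendsto_powerset_atTop :
    Tendsto (fun U : Finset ℕ => U.powerset) atTop atTop := by
  rw [Filter.tendsto_atTop_atTop]
  intro V
  refine ⟨V.sup id, fun U hU => ?_⟩
  intro u hu
  exact Finset.mem_powerset.2 (le_trans (Finset.le_sup (f := id) hu) hU)

lemma summable_norm_prod {v : ℕ → ℂ} (hv : Summable fun k => ‖v k‖) :
    Summable (fun u : Finset ℕ => ∏ k ∈ u, ‖v k‖) := by
  apply summable_of_sum_le (c := Real.exp (∑' k, ‖v k‖))
    (Pi.le_def.mpr fun u => Finset.prod_nonneg fun k _ => norm_nonneg _)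
  intro V
  calc ∑ u ∈ V, ∏ k ∈ u, ‖v k‖
      ≤ ∑ u ∈ (V.sup id).powerset, ∏ k ∈ u, ‖v k‖ := by
        apply Finset.sum_le_sum_of_subset_of_nonneg
        · intro u hu
          exact Finset.mem_powerset.2 (Finset.le_sup (f := id) hu)
        · intro u _ _
          exact Finset.prod_nonneg fun k _ => norm_nonneg _
    _ = ∏ k ∈ V.sup id, (‖v k‖ + 1) := by rw [Finset.prod_add]; simp
    _ ≤ ∏ k ∈ V.sup id, Real.exp ‖v k‖ := by
        refine Finset.prod_le_prod (fun k _ => by positivity) (fun k _ => ?_)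
        exact Real.add_one_le_exp ‖v k‖
    _ = Real.exp (∑ k ∈ V.sup id, ‖v k‖) := (Real.exp_sum _ _).symm
    _ ≤ Real.exp (∑' k, ‖v k‖) := by
        apply Real.exp_le_exp.2
        exact Summable.sum_le_tsum _ (fun k _ => norm_nonneg _) hv

lemma summable_prod {v : ℕ → ℂ} (hv : Summable fun k => ‖v k‖) :
    Summable (fun u : Finset ℕ => ∏ k ∈ u, v k) := by
  apply Summable.of_norm
  have := summable_norm_prod hv
  simpa [norm_prod] using this

lemma hasProd_one_add {v : ℕ → ℂ} (hv : Summable fun k => ‖v k‖) :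
    HasProd (fun k => 1 + v k) (∑' u : Finset ℕ, ∏ k ∈ u, v k) := by
  have hs := (summable_prod hv).hasSum
  have key : (fun U : Finset ℕ => ∏ k ∈ U, (1 + v k)) =
      (fun V : Finset (Finset ℕ) => ∑ u ∈ V, ∏ k ∈ u, v k) ∘
        fun U : Finset ℕ => U.powerset := by
    funext U
    simp only [Function.comp_apply]
    rw [show ∏ k ∈ U, (1 + v k) = ∏ k ∈ U, (v k + 1) from
        Finset.prod_congr rfl fun k _ => add_comm _ _,
      Finset.prod_add]
    simp
  have h2 := hs.comp tendsto_powerset_atTop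
  rw [← key] at h2
  exact h2

end Stmt1Helper

open Stmt1Helper

set_option maxHeartbeats 2000000 in
/-- the sum of q^{k₁+...+kₙ} over strictly increasing n-tuples of
nonnegative integers containing {j₁,...,jₘ} equals q^{j₁+...+jₘ} times the coefficient
of z^{n-m} in ∏_{k≥0}(1+qᵏz) · ∏_{i=1}^m (1+q^{jᵢ}z)⁻¹. -/
theorem stmt1 (q : ℝ) (hq0 : 0 < q) (hq1 : q < 1) (m n : ℕ) (hmn : m ≤ n)
    (j : Fin m → ℕ) (hj : StrictMono j) :
    ∑' f : {f : Fin n → ℕ // StrictMono f ∧ Set.range j ⊆ Set.range f},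
      (q : ℂ) ^ (∑ i, (f : Fin n → ℕ) i) =
    (q : ℂ) ^ (∑ i, j i) *
      (iteratedDeriv (n - m)
          (fun z : ℂ => (∏' k : ℕ, (1 + (q : ℂ) ^ k * z)) *
            ∏ i, (1 + (q : ℂ) ^ (j i) * z)⁻¹) 0 / (n - m).factorial) := by
  classical
  set r := n - m with hr
  set S : Finset ℕ := Finset.image j Finset.univ with hS
  set w : ℕ → ℂ := fun k => if k ∈ S then 0 else (q : ℂ) ^ k with hw
  have hqc : ‖(q : ℂ)‖ = q := by
    rw [Complex.norm_real, Real.norm_eq_abs, abs_of_pos hq0]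
  have hqsum : Summable (fun k : ℕ => q ^ k) :=
    summable_geometric_of_lt_one hq0.le hq1
  have hwnorm : ∀ k, ‖w k‖ ≤ q ^ k := by
    intro k
    by_cases hk : k ∈ S <;>
      simp [hw, hk, norm_pow, hqc, pow_nonneg hq0.le, abs_of_pos hq0]
  have hwsum : Summable (fun k => ‖w k‖) :=
    Summable.of_nonneg_of_le (fun k => norm_nonneg _) hwnorm hqsum
  have hswn : Summable (fun u : Finset ℕ => ∏ k ∈ u, ‖w k‖) := summable_norm_prod hwsum
  have hsw : Summable (fun u : Finset ℕ => ∏ k ∈ u, w k) := summable_prod hwsum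
  set c : ℕ → ℂ :=
    fun d => ∑' u : {u : Finset ℕ // u.card = d}, ∏ k ∈ (u : Finset ℕ), w k with hc
  have hsub : ∀ d : ℕ,
      Summable (fun u : {u : Finset ℕ // u.card = d} => ∏ k ∈ (u : Finset ℕ), w k) :=
    fun d => hsw.subtype {u : Finset ℕ | u.card = d}
  set G : ℂ → ℂ := fun z => ∑' u : Finset ℕ, ∏ k ∈ u, (w k * z) with hG
  have hwz : ∀ z : ℂ, Summable (fun k => ‖w k * z‖) := by
    intro z
    simpa [norm_mul] using hwsum.mul_right ‖z‖
  have hGsum : ∀ z : ℂ, HasSum (fun d : ℕ => c d * z ^ d) (G z) := by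
    intro z
    have h1 : HasSum (fun u : Finset ℕ => ∏ k ∈ u, (w k * z)) (G z) :=
      (summable_prod (hwz z)).hasSum
    have h2 : HasSum (fun p : Σ d : ℕ, {u : Finset ℕ // u.card = d} =>
        ∏ k ∈ (p.2 : Finset ℕ), (w k * z)) (G z) :=
      ((Equiv.sigmaFiberEquiv fun u : Finset ℕ => u.card).hasSum_iff).2 h1
    refine h2.sigma fun d => ?_
    have h3 := ((hsub d).hasSum).mul_right (z ^ d)
    have h4 : (fun u : {u : Finset ℕ // u.card = d} =>
        ∏ k ∈ (u : Finset ℕ), (w k * z))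
        = fun u : {u : Finset ℕ // u.card = d} =>
          (∏ k ∈ (u : Finset ℕ), w k) * z ^ d := by
      funext u
      rw [Finset.prod_mul_distrib, Finset.prod_const, u.2]
    rw [h4]
    exact h3
  set p : FormalMultilinearSeries ℂ ℂ ℂ :=
    fun d => (c d) • ContinuousMultilinearMap.mkPiAlgebraFin ℂ d ℂ with hp
  have hpapp : ∀ (d : ℕ) (y : ℂ), (p d fun _ => y) = c d * y ^ d := by
    intro d y
    simp [hp, ContinuousMultilinearMap.smul_apply,
      ContinuousMultilinearMap.mkPiAlgebraFin_apply, List.ofFn_const,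
      List.prod_replicate, smul_eq_mul]
  have hcb : ∀ d, ‖c d‖ ≤ ∑' u : Finset ℕ, ∏ k ∈ u, ‖w k‖ := by
    intro d
    have hns : Summable (fun u : {u : Finset ℕ // u.card = d} =>
        ‖∏ k ∈ (u : Finset ℕ), w k‖) := by
      have := hswn.subtype {u : Finset ℕ | u.card = d}
      exact this.congr fun u => (norm_prod _ _).symm
    calc ‖c d‖ ≤ ∑' u : {u : Finset ℕ // u.card = d}, ‖∏ k ∈ (u : Finset ℕ), w k‖ :=
          norm_tsum_le_tsum_norm hns
      _ ≤ ∑' u : Finset ℕ, ∏ k ∈ u, ‖w k‖ := by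
          exact Summable.tsum_le_tsum_of_inj (fun u => (u : Finset ℕ)) Subtype.val_injective
            (fun u _ => Finset.prod_nonneg fun k _ => norm_nonneg _)
            (fun u => le_of_eq (norm_prod _ _)) hns hswn
  have hradius : (1 : ℝ≥0∞) ≤ p.radius := by
    have := p.le_radius_of_bound (∑' u : Finset ℕ, ∏ k ∈ u, ‖w k‖) (r := 1) ?_
    · simpa using this
    · intro d
      have : ‖p d‖ = ‖c d‖ := by
        show ‖c d • ContinuousMultilinearMap.mkPiAlgebraFin ℂ d ℂ‖ = ‖c d‖
        rw [norm_smul (c d) (ContinuousMultilinearMap.mkPiAlgebraFin ℂ d ℂ),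
          ContinuousMultilinearMap.norm_mkPiAlgebraFin, mul_one]
      rw [this]
      simpa using hcb d
  have hFPS : HasFPowerSeriesOnBall G p 0 1 := by
    refine ⟨by simpa using hradius, one_pos, ?_⟩
    intro y _
    rw [zero_add]
    simpa [hpapp] using hGsum y
  have hIter : iteratedDeriv r G 0 = (r.factorial : ℂ) * c r := by
    have h := hFPS.factorial_smul (1 : ℂ) r
    rw [iteratedDeriv_eq_iteratedFDeriv, ← h, hpapp]
    simp [nsmul_eq_mul]
  -- F equals G near 0
  have hFG : (fun z : ℂ => (∏' k : ℕ, (1 + (q : ℂ) ^ k * z)) *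
      ∏ i, (1 + (q : ℂ) ^ (j i) * z)⁻¹) =ᶠ[nhds (0 : ℂ)] G := by
    filter_upwards [Metric.ball_mem_nhds (0 : ℂ) one_pos] with z hz
    have hz1 : ‖z‖ < 1 := by simpa using hz
    have hne : ∀ i : Fin m, (1 + (q : ℂ) ^ (j i) * z) ≠ 0 := by
      intro i h0
      have h1 : ‖(q : ℂ) ^ (j i) * z‖ < 1 := by
        rw [norm_mul, norm_pow, hqc]
        calc q ^ (j i) * ‖z‖ ≤ 1 * ‖z‖ :=
              mul_le_mul_of_nonneg_right (pow_le_one₀ hq0.le hq1.le) (norm_nonneg z)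
          _ < 1 := by rwa [one_mul]
      have h2 : (q : ℂ) ^ (j i) * z = -1 := by
        have := eq_neg_of_add_eq_zero_right h0
        rw [this]
      rw [h2] at h1
      simp at h1
    have hwprod : HasProd (fun k => 1 + w k * z) (G z) := hasProd_one_add (hwz z)
    have hfin : HasProd (fun k => if k ∈ S then 1 + (q : ℂ) ^ k * z else 1)
        (∏ k ∈ S, (1 + (q : ℂ) ^ k * z)) := by
      have h := hasProd_prod_of_ne_finset_one
        (f := fun k => if k ∈ S then 1 + (q : ℂ) ^ k * z else 1) (s := S)
        (L := SummationFilter.unconditional ℕ)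
        (fun b hb => if_neg hb)
      rwa [Finset.prod_congr rfl fun b hb => if_pos hb] at h
    have htp : (∏' k : ℕ, (1 + (q : ℂ) ^ k * z))
        = G z * ∏ k ∈ S, (1 + (q : ℂ) ^ k * z) := by
      have hmul := hwprod.mul hfin
      rw [← hmul.tprod_eq]
      exact tprod_congr fun k => by
        by_cases hk : k ∈ S <;> simp [Pi.mul_apply, hw, hk]
    rw [htp]
    have hprodS : ∏ k ∈ S, (1 + (q : ℂ) ^ k * z) = ∏ i, (1 + (q : ℂ) ^ (j i) * z) := by
      rw [hS]
      exact Finset.prod_image fun x _ y _ hxy => hj.injective hxy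
    rw [hprodS, mul_assoc, ← Finset.prod_mul_distrib]
    rw [Finset.prod_congr rfl fun i _ => mul_inv_cancel₀ (hne i)]
    simp
  have hRHS : iteratedDeriv r (fun z : ℂ => (∏' k : ℕ, (1 + (q : ℂ) ^ k * z)) *
      ∏ i, (1 + (q : ℂ) ^ (j i) * z)⁻¹) 0 = (r.factorial : ℂ) * c r :=
    (hFG.iteratedDeriv_eq r).trans hIter
  -- LHS combinatorics
  have hjS : ∀ i : Fin m, j i ∈ S := fun i => Finset.mem_image_of_mem j (Finset.mem_univ i)
  have hScard : S.card = m := by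
    rw [hS, Finset.card_image_of_injective _ hj.injective, Finset.card_univ,
      Fintype.card_fin]
  have himg : ∀ f : {f : Fin n → ℕ // StrictMono f ∧ Set.range j ⊆ Set.range f},
      S ⊆ Finset.image (f : Fin n → ℕ) Finset.univ ∧
        (Finset.image (f : Fin n → ℕ) Finset.univ).card = n := by
    intro f
    constructor
    · intro k hk
      rw [hS, Finset.mem_image] at hk
      obtain ⟨i, -, rfl⟩ := hk
      obtain ⟨x, hx⟩ := f.2.2 ⟨i, rfl⟩
      exact Finset.mem_image.2 ⟨x, Finset.mem_univ x, hx⟩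
    · rw [Finset.card_image_of_injective _ f.2.1.injective, Finset.card_univ,
        Fintype.card_fin]
  set I : {f : Fin n → ℕ // StrictMono f ∧ Set.range j ⊆ Set.range f} →
      {u : Finset ℕ // u.card = r} :=
    fun f => ⟨Finset.image (f : Fin n → ℕ) Finset.univ \ S, by
      rw [Finset.card_sdiff_of_subset (himg f).1, (himg f).2, hScard]⟩ with hI
  have hInj : Function.Injective I := by
    intro f g hfg
    have hval := congrArg Subtype.val hfg
    simp only [hI] at hval
    have h1 : Finset.image (f : Fin n → ℕ) Finset.univ
        = Finset.image (g : Fin n → ℕ) Finset.univ := by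
      calc Finset.image (f : Fin n → ℕ) Finset.univ
          = (Finset.image (f : Fin n → ℕ) Finset.univ \ S) ∪ S :=
            (Finset.sdiff_union_of_subset (himg f).1).symm
        _ = (Finset.image (g : Fin n → ℕ) Finset.univ \ S) ∪ S := by rw [hval]
        _ = Finset.image (g : Fin n → ℕ) Finset.univ :=
            Finset.sdiff_union_of_subset (himg g).1
    have hf' := Finset.orderEmbOfFin_unique (himg f).2
      (fun x => Finset.mem_image_of_mem _ (Finset.mem_univ x)) f.2.1
    have hg' := Finset.orderEmbOfFin_unique (himg f).2
      (fun x => by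
        rw [h1]
        exact Finset.mem_image_of_mem _ (Finset.mem_univ x)) g.2.1
    exact Subtype.ext (hf'.trans hg'.symm)
  have hval : ∀ f : {f : Fin n → ℕ // StrictMono f ∧ Set.range j ⊆ Set.range f},
      (q : ℂ) ^ (∑ i, j i) * ∏ k ∈ ((I f : {u : Finset ℕ // u.card = r}) : Finset ℕ), w k
        = (q : ℂ) ^ (∑ i, (f : Fin n → ℕ) i) := by
    intro f
    have hIf : ((I f : {u : Finset ℕ // u.card = r}) : Finset ℕ)
        = Finset.image (f : Fin n → ℕ) Finset.univ \ S := rfl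
    have h2 : ∏ k ∈ ((I f : {u : Finset ℕ // u.card = r}) : Finset ℕ), w k
        = (q : ℂ) ^ (∑ k ∈ (Finset.image (f : Fin n → ℕ) Finset.univ \ S), k) := by
      rw [hIf]
      rw [Finset.prod_congr rfl fun k hk => show w k = (q : ℂ) ^ k by
        simp [hw, (Finset.mem_sdiff.1 hk).2]]
      exact Finset.prod_pow_eq_pow_sum _ _ _
    rw [h2, ← pow_add]
    congr 1
    have h3 : ∑ k ∈ (Finset.image (f : Fin n → ℕ) Finset.univ \ S), k + ∑ k ∈ S, k
        = ∑ k ∈ Finset.image (f : Fin n → ℕ) Finset.univ, k :=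
      Finset.sum_sdiff (himg f).1
    have h4 : ∑ k ∈ S, k = ∑ i, j i := by
      rw [hS]
      exact Finset.sum_image fun x _ y _ hxy => hj.injective hxy
    have h5 : ∑ k ∈ Finset.image (f : Fin n → ℕ) Finset.univ, k
        = ∑ i, (f : Fin n → ℕ) i :=
      Finset.sum_image fun x _ y _ hxy => f.2.1.injective hxy
    omega
  have hsupp : ∀ u : {u : Finset ℕ // u.card = r},
      ((q : ℂ) ^ (∑ i, j i) * ∏ k ∈ (u : Finset ℕ), w k) ≠ 0 → u ∈ Set.range I := by
    intro u hu
    have hdisj : Disjoint (u : Finset ℕ) S := by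
      rw [Finset.disjoint_left]
      intro k hk hkS
      apply hu
      have : ∏ k' ∈ (u : Finset ℕ), w k' = 0 :=
        Finset.prod_eq_zero hk (by simp [hw, hkS])
      rw [this, mul_zero]
    have hcardt : ((u : Finset ℕ) ∪ S).card = n := by
      rw [Finset.card_union_of_disjoint hdisj, u.2, hScard]
      omega
    refine ⟨⟨fun i => ((u : Finset ℕ) ∪ S).orderEmbOfFin hcardt i, ?_, ?_⟩, ?_⟩
    · exact (((u : Finset ℕ) ∪ S).orderEmbOfFin hcardt).strictMono
    · rintro x ⟨i, rfl⟩
      have hmem : (j i : ℕ) ∈ ((u : Finset ℕ) ∪ S) := Finset.mem_union_right _ (hjS i)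
      show j i ∈ Set.range fun i => ((u : Finset ℕ) ∪ S).orderEmbOfFin hcardt i
      rw [show (Set.range fun i => ((u : Finset ℕ) ∪ S).orderEmbOfFin hcardt i)
          = Set.range ⇑(((u : Finset ℕ) ∪ S).orderEmbOfFin hcardt) from rfl,
        Finset.range_orderEmbOfFin]
      exact hmem
    · apply Subtype.ext
      show Finset.image _ Finset.univ \ S = (u : Finset ℕ)
      have himgt : Finset.image (fun i => ((u : Finset ℕ) ∪ S).orderEmbOfFin hcardt i)
          Finset.univ = (u : Finset ℕ) ∪ S := by
        apply Finset.coe_injective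
        rw [Finset.coe_image, Finset.coe_univ, Set.image_univ]
        exact Finset.range_orderEmbOfFin _ _
      rw [himgt]
      ext k
      simp only [Finset.mem_sdiff, Finset.mem_union]
      constructor
      · rintro ⟨h | h, hn⟩
        · exact h
        · exact absurd h hn
      · intro hk
        exact ⟨Or.inl hk, Finset.disjoint_left.1 hdisj hk⟩
  have key : (∑' u : {u : Finset ℕ // u.card = r},
        ((q : ℂ) ^ (∑ i, j i) * ∏ k ∈ (u : Finset ℕ), w k))
      = ∑' f : {f : Fin n → ℕ // StrictMono f ∧ Set.range j ⊆ Set.range f},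
        (q : ℂ) ^ (∑ i, (f : Fin n → ℕ) i) := by
    refine tsum_eq_tsum_of_ne_zero_bij (fun x => I x.1) ?_ ?_ ?_
    · intro x y hxy
      exact Subtype.ext (hInj hxy)
    · intro u hu
      obtain ⟨f, hf⟩ := hsupp u hu
      have hgf : (q : ℂ) ^ (∑ i, (f : Fin n → ℕ) i) ≠ 0 :=
        pow_ne_zero _ (by exact_mod_cast hq0.ne')
      exact ⟨⟨f, hgf⟩, hf⟩
    · intro x
      exact hval x.1
  rw [← key, tsum_mul_left, hRHS, hc]
  rw [mul_div_cancel_left₀ _ (by exact_mod_cast (Nat.factorial_ne_zero r) : (r.factorial : ℂ) ≠ 0)]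
end

section
/- For 0 < q < 1 and all nonzero complex w, the Jacobi triple product identity holds: (-w;q)_∞ · (-q/w;q)_∞ · (q;q)_∞ = ∑_{k=-∞}^{∞} q^{k(k-1)/2} w^k. -/
open Finset Filter Topology

namespace JTP


lemma prod_one_add_sub_one_le (f : ℕ → ℂ) (t : Finset ℕ) :
    ‖(∏ b ∈ t, (1 + f b)) - 1‖ ≤ (∏ b ∈ t, (1 + ‖f b‖)) - 1 := by
  classical
  induction t using Finset.cons_induction with
  | empty => simp
  | cons a s ha ih =>
    rw [Finset.prod_cons, Finset.prod_cons]
    have hpos : (1:ℝ) ≤ ∏ b ∈ s, (1 + ‖f b‖) := by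
      calc (1:ℝ) = ∏ b ∈ s, 1 := by simp
        _ ≤ ∏ b ∈ s, (1 + ‖f b‖) :=
          Finset.prod_le_prod (by simp) (fun b _ => le_add_of_nonneg_right (norm_nonneg _))
    have h1 : (1 + f a) * ∏ b ∈ s, (1 + f b) - 1
        = (1 + f a) * ((∏ b ∈ s, (1 + f b)) - 1) + f a := by ring
    rw [h1]
    calc ‖(1 + f a) * ((∏ b ∈ s, (1 + f b)) - 1) + f a‖
        ≤ ‖1 + f a‖ * ‖(∏ b ∈ s, (1 + f b)) - 1‖ + ‖f a‖ := by
          refine (norm_add_le _ _).trans ?_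
          rw [norm_mul]
      _ ≤ (1 + ‖f a‖) * ((∏ b ∈ s, (1 + ‖f b‖)) - 1) + ‖f a‖ := by
          have h2 : ‖(1:ℂ) + f a‖ ≤ 1 + ‖f a‖ := (norm_add_le _ _).trans (by simp)
          have := mul_le_mul h2 ih (norm_nonneg _) (by positivity)
          linarith
      _ = (1 + ‖f a‖) * ∏ b ∈ s, (1 + ‖f b‖) - 1 := by ring

lemma prod_one_add_le_exp (g : ℕ → ℝ) (hg : ∀ b, 0 ≤ g b) (t : Finset ℕ) :
    ∏ b ∈ t, (1 + g b) ≤ Real.exp (∑ b ∈ t, g b) := by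
  rw [Real.exp_sum]
  refine Finset.prod_le_prod (fun b _ => by linarith [hg b]) (fun b _ => ?_)
  have := Real.add_one_le_exp (g b); linarith

lemma multipliable_one_add (f : ℕ → ℂ) (hf : Summable fun k => ‖f k‖) :
    Multipliable (fun k => 1 + f k) := by
  classical
  suffices hcs : CauchySeq fun s : Finset ℕ => ∏ b ∈ s, (1 + f b) by
    obtain ⟨a, ha⟩ := cauchySeq_tendsto_of_complete hcs
    exact ⟨a, ha⟩
  rw [Metric.cauchySeq_iff']
  intro ε hε
  set C : ℝ := Real.exp (∑' k, ‖f k‖) with hC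
  have hC1 : (1:ℝ) ≤ C := Real.one_le_exp (tsum_nonneg fun _ => norm_nonneg _)
  have hC0 : (0:ℝ) < C := lt_of_lt_of_le one_pos hC1
  set δ : ℝ := Real.log (1 + ε / (2 * C)) with hδdef
  have hεC : 0 < ε / (2 * C) := by positivity
  have hδ : 0 < δ := Real.log_pos (by linarith)
  obtain ⟨s₀, hs₀⟩ := summable_iff_vanishing_norm.mp hf δ hδ
  refine ⟨s₀, fun u hu => ?_⟩
  have hsub : s₀ ⊆ u := hu
  have hsplit : (∏ b ∈ u, (1 + f b)) =
      (∏ b ∈ u \ s₀, (1 + f b)) * ∏ b ∈ s₀, (1 + f b) := (Finset.prod_sdiff hsub).symm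
  rw [dist_eq_norm, hsplit]
  have key : (∏ b ∈ u \ s₀, (1 + f b)) * ∏ b ∈ s₀, (1 + f b) - ∏ b ∈ s₀, (1 + f b)
      = ((∏ b ∈ u \ s₀, (1 + f b)) - 1) * ∏ b ∈ s₀, (1 + f b) := by ring
  rw [key, norm_mul]
  have hd : Disjoint (u \ s₀) s₀ := Finset.sdiff_disjoint
  have hsum_lt : ∑ b ∈ u \ s₀, ‖f b‖ < δ := by
    have := hs₀ _ hd
    have hnn : 0 ≤ ∑ b ∈ u \ s₀, ‖f b‖ := Finset.sum_nonneg fun b _ => norm_nonneg _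
    rwa [Real.norm_of_nonneg hnn] at this
  have h1 : ‖(∏ b ∈ u \ s₀, (1 + f b)) - 1‖ ≤ Real.exp δ - 1 := by
    refine (prod_one_add_sub_one_le f _).trans ?_
    have := prod_one_add_le_exp (fun b => ‖f b‖) (fun b => norm_nonneg _) (u \ s₀)
    have h2 : Real.exp (∑ b ∈ u \ s₀, ‖f b‖) ≤ Real.exp δ :=
      Real.exp_le_exp.mpr hsum_lt.le
    linarith
  have h2 : ‖∏ b ∈ s₀, (1 + f b)‖ ≤ C := by
    have ha : ‖∏ b ∈ s₀, (1 + f b)‖ ≤ ∏ b ∈ s₀, (1 + ‖f b‖) :=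
      (Finset.norm_prod_le _ _).trans (Finset.prod_le_prod (fun b _ => norm_nonneg _)
        (fun b _ => (norm_add_le _ _).trans (by simp)))
    exact ha.trans ((prod_one_add_le_exp (fun b => ‖f b‖) (fun b => norm_nonneg _) s₀).trans
      (Real.exp_le_exp.mpr (Summable.sum_le_tsum s₀ (fun b _ => norm_nonneg _) hf)))
  have hexp : Real.exp δ - 1 = ε / (2 * C) := by
    rw [hδdef, Real.exp_log (by linarith)]; ring
  calc ‖(∏ b ∈ u \ s₀, (1 + f b)) - 1‖ * ‖∏ b ∈ s₀, (1 + f b)‖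
      ≤ (Real.exp δ - 1) * C := by
        apply mul_le_mul h1 h2 (norm_nonneg _)
        have := Real.one_le_exp hδ.le; linarith
    _ = ε / 2 := by rw [hexp]; field_simp
    _ < ε := by linarith

lemma tendsto_prod_range (f : ℕ → ℂ) (hf : Summable fun k => ‖f k‖) :
    Tendsto (fun N => ∏ j ∈ Finset.range N, (1 + f j)) atTop (𝓝 (∏' k, (1 + f k))) :=
  (multipliable_one_add f hf).hasProd.tendsto_prod_nat




noncomputable def Fq (q : ℝ) (N : ℕ) : ℝ := ∏ i ∈ Finset.range N, (1 - q ^ (i + 1))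

variable {q : ℝ}

lemma fac_nonneg (hq0 : 0 < q) (hq1 : q < 1) (i : ℕ) : 0 ≤ 1 - q ^ (i + 1) := by
  have := pow_lt_one₀ hq0.le hq1 (show i + 1 ≠ 0 by omega); linarith

lemma fac_le_one (hq0 : 0 < q) (i : ℕ) : (1:ℝ) - q ^ (i + 1) ≤ 1 := by
  have := pow_pos hq0 (i + 1); linarith

lemma Fq_pos (hq0 : 0 < q) (hq1 : q < 1) (N : ℕ) : 0 < Fq q N := by
  refine Finset.prod_pos fun i _ => ?_
  have : q ^ (i + 1) < 1 := pow_lt_one₀ hq0.le hq1 (Nat.succ_ne_zero i)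
  linarith

lemma Fq_succ (N : ℕ) : Fq q (N + 1) = Fq q N * (1 - q ^ (N + 1)) := by
  rw [Fq, Finset.prod_range_succ]; rfl

lemma Fq_le_one (hq0 : 0 < q) (hq1 : q < 1) (N : ℕ) : Fq q N ≤ 1 := by
  exact Finset.prod_le_one (fun i _ => fac_nonneg hq0 hq1 i) (fun i _ => fac_le_one hq0 i)

lemma Fq_anti (hq0 : 0 < q) (hq1 : q < 1) : Antitone (Fq q) := by
  refine antitone_nat_of_succ_le fun N => ?_
  rw [Fq_succ]
  nlinarith [Fq_pos hq0 hq1 N, fac_le_one hq0 N, fac_nonneg hq0 hq1 N]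

lemma exists_Fq_lb (hq0 : 0 < q) (hq1 : q < 1) : ∃ c > 0, ∀ N, c ≤ Fq q N := by
  -- choose M with q^(M+1) ≤ (1-q)/2
  obtain ⟨M, hM0⟩ := exists_pow_lt_of_lt_one (by linarith : (0:ℝ) < (1 - q)/2) hq1
  have hM : q ^ (M+1) ≤ (1 - q)/2 := by
    have h1 : q ^ (M+1) ≤ q ^ M := pow_le_pow_of_le_one hq0.le hq1.le (by omega)
    linarith
  refine ⟨Fq q M / 2, by have := Fq_pos hq0 hq1 M; positivity, fun N => ?_⟩
  rcases le_total N M with h | h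
  · have := Fq_anti hq0 hq1 h
    have := Fq_pos hq0 hq1 M
    linarith
  · -- N ≥ M : Fq N = Fq M * ∏_{i ∈ Ico M N} (1 - q^(i+1)) ≥ Fq M * 1/2
    have hsplit : Fq q N = Fq q M * ∏ i ∈ Finset.Ico M N, (1 - q ^ (i+1)) := by
      rw [Fq, Fq, ← Finset.prod_range_mul_prod_Ico _ h]
    have hW : (1:ℝ) - ∑ i ∈ Finset.Ico M N, q ^ (i+1) ≤ ∏ i ∈ Finset.Ico M N, (1 - q ^ (i+1)) := by
      rw [Finset.prod_one_sub_ordered]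
      have : ∑ i ∈ Finset.Ico M N, q^(i+1) * ∏ j ∈ Finset.Ico M N with j < i, (1 - q ^ (j+1))
          ≤ ∑ i ∈ Finset.Ico M N, q ^ (i+1) := by
        refine Finset.sum_le_sum fun i _ => ?_
        have hp1 : ∏ j ∈ Finset.Ico M N with j < i, (1 - q ^ (j+1)) ≤ 1 :=
          Finset.prod_le_one (fun j _ => fac_nonneg hq0 hq1 j) (fun j _ => fac_le_one hq0 j)
        have hp0 : (0:ℝ) ≤ ∏ j ∈ Finset.Ico M N with j < i, (1 - q ^ (j+1)) :=
          Finset.prod_nonneg fun j _ => fac_nonneg hq0 hq1 j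
        nlinarith [pow_pos hq0 (i+1)]
      linarith
    have hsum : ∑ i ∈ Finset.Ico M N, q ^ (i+1) ≤ 1/2 := by
      have h1 : ∑ i ∈ Finset.Ico M N, q ^ (i+1) = q^(M+1) * ∑ j ∈ Finset.range (N - M), q ^ j := by
        rw [Finset.mul_sum, Finset.sum_Ico_eq_sum_range]
        refine Finset.sum_congr rfl fun j _ => ?_
        rw [← pow_add]; ring_nf
      have h2 : ∑ j ∈ Finset.range (N - M), q ^ j ≤ 1 / (1 - q) := by
        rw [geom_sum_eq (by intro h; rw [h] at hq1; exact lt_irrefl 1 hq1 : q ≠ 1)]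
        have hq' : (0:ℝ) < 1 - q := by linarith
        have key : (q ^ (N - M) - 1) / (q - 1) = (1 - q ^ (N - M)) / (1 - q) := by
          have hne : q - 1 ≠ 0 := by linarith
          have hne2 : (1:ℝ) - q ≠ 0 := by linarith
          field_simp
          ring
        rw [key]
        have hle : (1:ℝ) - q ^ (N - M) ≤ 1 := by
          have := pow_pos hq0 (N - M); linarith
        gcongr
      calc ∑ i ∈ Finset.Ico M N, q ^ (i+1) = q^(M+1) * ∑ j ∈ Finset.range (N - M), q ^ j := h1
        _ ≤ ((1-q)/2) * (1/(1-q)) := by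
            refine mul_le_mul hM h2 (Finset.sum_nonneg fun j _ => by positivity) (by linarith)
        _ = 1/2 := by
            have hne2 : (1:ℝ) - q ≠ 0 := by linarith
            field_simp
    have hFM := Fq_pos hq0 hq1 M
    have hprod : (1:ℝ)/2 ≤ ∏ i ∈ Finset.Ico M N, (1 - q ^ (i+1)) := by linarith
    rw [hsplit]
    nlinarith

noncomputable def Lq (q : ℝ) : ℝ := ⨅ N, Fq q N

lemma Lq_pos (hq0 : 0 < q) (hq1 : q < 1) : 0 < Lq q := by
  obtain ⟨c, hc, hcb⟩ := exists_Fq_lb hq0 hq1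
  have : c ≤ Lq q := le_ciInf hcb
  linarith

lemma Lq_le (hq0 : 0 < q) (hq1 : q < 1) (N : ℕ) : Lq q ≤ Fq q N := by
  obtain ⟨c, hc, hcb⟩ := exists_Fq_lb hq0 hq1
  exact ciInf_le ⟨c, fun x ⟨N, hN⟩ => hN ▸ hcb N⟩ N

lemma tendsto_Fq (hq0 : 0 < q) (hq1 : q < 1) : Tendsto (Fq q) atTop (𝓝 (Lq q)) := by
  obtain ⟨c, hc, hcb⟩ := exists_Fq_lb hq0 hq1
  exact tendsto_atTop_ciInf (Fq_anti hq0 hq1) ⟨c, fun x ⟨N, hN⟩ => hN ▸ hcb N⟩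


noncomputable def qb (q : ℝ) (N k : ℕ) : ℝ :=
  if k ≤ N then Fq q N / (Fq q k * Fq q (N - k)) else 0

lemma qb_eq {N k : ℕ} (h : k ≤ N) : qb q N k = Fq q N / (Fq q k * Fq q (N - k)) := if_pos h

lemma qb_of_gt {N k : ℕ} (h : N < k) : qb q N k = 0 := if_neg (by omega)

lemma Fq_zero : Fq q 0 = 1 := by simp [Fq]

lemma qb_zero (hq0 : 0 < q) (hq1 : q < 1) (N : ℕ) : qb q N 0 = 1 := by
  rw [qb_eq (Nat.zero_le N), Fq_zero]
  rw [Nat.sub_zero, one_mul, div_self (Fq_pos hq0 hq1 N).ne']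

lemma qb_self (hq0 : 0 < q) (hq1 : q < 1) (N : ℕ) : qb q N N = 1 := by
  rw [qb_eq (le_refl N), Nat.sub_self, Fq_zero, mul_one, div_self (Fq_pos hq0 hq1 N).ne']

lemma one_sub_pow_ne (hq0 : 0 < q) (hq1 : q < 1) {j : ℕ} (hj : j ≠ 0) : 1 - q ^ j ≠ 0 := by
  have : q ^ j < 1 := pow_lt_one₀ hq0.le hq1 hj
  intro h; linarith

lemma pascal1 (hq0 : 0 < q) (hq1 : q < 1) (N k : ℕ) :
    qb q (N+1) (k+1) = qb q N (k+1) + q ^ (N - k) * qb q N k := by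
  rcases lt_trichotomy k N with hk | hk | hk
  · -- k < N
    have h1 : k + 1 ≤ N := by omega
    have hNk : N - k = (N - k - 1) + 1 := by omega
    have hNk2 : N - (k + 1) = N - k - 1 := by omega
    have hexp : q ^ (N + 1) = q ^ (k + 1) * q ^ (N - k) := by
      rw [← pow_add]; congr 1; omega
    rw [qb_eq (by omega : k + 1 ≤ N + 1), qb_eq h1, qb_eq (by omega : k ≤ N)]
    have hred : N + 1 - (k + 1) = N - k := by omega
    rw [hred, hNk2, Fq_succ N]
    rw [show Fq q (N - k) = Fq q ((N - k - 1) + 1) from by rw [← hNk]]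
    rw [Fq_succ (N - k - 1), Fq_succ k]
    rw [show (N - k - 1) + 1 = N - k from hNk.symm, hexp]
    have hFN := (Fq_pos hq0 hq1 N).ne'
    have hFk := (Fq_pos hq0 hq1 k).ne'
    have hFc := (Fq_pos hq0 hq1 (N - k - 1)).ne'
    have hx := one_sub_pow_ne hq0 hq1 (Nat.succ_ne_zero k)
    have hy := one_sub_pow_ne hq0 hq1 (show N - k ≠ 0 by omega)
    field_simp
    ring
  · -- k = N
    subst hk
    rw [qb_self hq0 hq1, qb_of_gt (Nat.lt_succ_self k), qb_self hq0 hq1, Nat.sub_self]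
    simp
  · -- k > N
    rw [qb_of_gt (by omega), qb_of_gt (by omega), qb_of_gt (by omega)]
    simp

lemma pascal2 (hq0 : 0 < q) (hq1 : q < 1) (N k : ℕ) :
    qb q (N+1) (k+1) = qb q N k + q ^ (k + 1) * qb q N (k+1) := by
  rcases lt_trichotomy k N with hk | hk | hk
  · have h1 : k + 1 ≤ N := by omega
    have hNk : N - k = (N - k - 1) + 1 := by omega
    have hNk2 : N - (k + 1) = N - k - 1 := by omega
    have hexp : q ^ (N + 1) = q ^ (k + 1) * q ^ (N - k) := by
      rw [← pow_add]; congr 1; omega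
    rw [qb_eq (by omega : k + 1 ≤ N + 1), qb_eq h1, qb_eq (by omega : k ≤ N)]
    have hred : N + 1 - (k + 1) = N - k := by omega
    rw [hred, hNk2, Fq_succ N]
    rw [show Fq q (N - k) = Fq q ((N - k - 1) + 1) from by rw [← hNk]]
    rw [Fq_succ (N - k - 1), Fq_succ k]
    rw [show (N - k - 1) + 1 = N - k from hNk.symm, hexp]
    have hFN := (Fq_pos hq0 hq1 N).ne'
    have hFk := (Fq_pos hq0 hq1 k).ne'
    have hFc := (Fq_pos hq0 hq1 (N - k - 1)).ne'
    have hx := one_sub_pow_ne hq0 hq1 (Nat.succ_ne_zero k)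
    have hy := one_sub_pow_ne hq0 hq1 (show N - k ≠ 0 by omega)
    field_simp
    ring
  · subst hk
    rw [qb_self hq0 hq1, qb_of_gt (Nat.lt_succ_self k), qb_self hq0 hq1]
    simp
  · rw [qb_of_gt (by omega), qb_of_gt (by omega), qb_of_gt (by omega)]
    simp


def ek (n k : ℕ) : ℤ := ((k:ℤ) - n) * ((k:ℤ) - n - 1) / 2

lemma half_succ (a : ℤ) : (a + 1) * a / 2 = a * (a - 1) / 2 + a := by
  obtain ⟨b, hb⟩ := Int.even_mul_succ_self (a - 1)
  have h1 : a * (a - 1) = b + b := by linear_combination hb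
  have h2 : (a + 1) * a = b + b + 2 * a := by linear_combination hb
  rw [h1, h2]; omega

lemma ek_succ (n k : ℕ) : ek n (k+1) = ek n k + ((k:ℤ) - n) := by
  unfold ek; push_cast
  rw [show ((k:ℤ) + 1 - n) * ((k:ℤ) + 1 - n - 1) = (((k:ℤ) - n) + 1) * ((k:ℤ) - n) from by ring]
  exact half_succ _

lemma ek_shift (n k : ℕ) : ek (n+1) (k+1) = ek n k := by
  unfold ek; push_cast; ring_nf

lemma ek_base0 (n : ℕ) : ek (n+1) 0 = ek n 0 + ((n:ℤ) + 1) := by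
  have h := half_succ (-(n:ℤ) - 1)
  unfold ek at *
  push_cast
  rw [show ((0:ℤ) - (n + 1)) * (0 - (n+1) - 1) = (-(n:ℤ) - 1) * ((-(n:ℤ) - 1) - 1) from by ring]
  rw [show ((0:ℤ) - n) * (0 - n - 1) = ((-(n:ℤ) - 1) + 1) * (-(n:ℤ) - 1) from by ring] at *
  omega


variable {w : ℂ}

lemma Jfin0 (hq0 : 0 < q) (hq1 : q < 1) (hw : w ≠ 0) (n : ℕ) :
    (∏ j ∈ Finset.range n, (1 + ((q:ℂ)/w) * (q:ℂ) ^ j))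
      = ∑ k ∈ Finset.range (n+1),
          (q:ℂ) ^ (ek n k) * w ^ ((k:ℤ) - (n:ℤ)) * ((qb q n k : ℝ) : ℂ) := by
  have hQ : (q:ℂ) ≠ 0 := by
    simpa using Complex.ofReal_ne_zero.mpr hq0.ne'
  induction n with
  | zero =>
    simp [ek, qb_zero hq0 hq1 0]
  | succ n ih =>
    rw [Finset.prod_range_succ, ih]
    have e1 : ∀ j ∈ Finset.range (n+1),
        (q:ℂ) ^ (ek (n+1) (j+1)) * w ^ (((j+1:ℕ):ℤ) - ((n+1:ℕ):ℤ)) * ((qb q (n+1) (j+1) : ℝ) : ℂ)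
        = (q:ℂ) ^ (ek n j) * w ^ ((j:ℤ) - n) * ((qb q n j : ℝ) : ℂ)
          + (q:ℂ) ^ (ek n j + ((j:ℤ)+1)) * w ^ ((j:ℤ) - n) * ((qb q n (j+1) : ℝ) : ℂ) := by
      intro j _
      rw [ek_shift, pascal2 hq0 hq1 n j]
      rw [show (((j+1:ℕ):ℤ) - ((n+1:ℕ):ℤ)) = (j:ℤ) - n from by push_cast; ring]
      rw [show (ek n j + ((j:ℤ)+1)) = ek n j + ((j+1:ℕ):ℤ) from by push_cast; ring]
      rw [zpow_add₀ hQ, zpow_natCast]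
      push_cast
      ring
    rw [show n + 1 + 1 = (n + 1) + 1 from rfl]
    rw [Finset.sum_range_succ' (fun k =>
      (q:ℂ) ^ (ek (n+1) k) * w ^ ((k:ℤ) - ((n+1:ℕ):ℤ)) * ((qb q (n+1) k : ℝ) : ℂ)) (n+1)]
    rw [Finset.sum_congr rfl e1, Finset.sum_add_distrib]
    have key2 : (∑ k ∈ Finset.range (n+1),
          (q:ℂ) ^ (ek n k) * w ^ ((k:ℤ) - (n:ℤ)) * ((qb q n k : ℝ) : ℂ)) * ((q:ℂ)/w * (q:ℂ)^n)
        = (∑ j ∈ Finset.range (n+1),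
            (q:ℂ) ^ (ek n j + ((j:ℤ)+1)) * w ^ ((j:ℤ) - n) * ((qb q n (j+1) : ℝ) : ℂ))
          + (q:ℂ) ^ (ek (n+1) 0) * w ^ ((0:ℤ) - ((n+1:ℕ):ℤ)) * ((qb q (n+1) 0 : ℝ) : ℂ) := by
      rw [Finset.sum_mul]
      have e2 : ∀ k ∈ Finset.range (n+1),
          ((q:ℂ) ^ (ek n k) * w ^ ((k:ℤ) - (n:ℤ)) * ((qb q n k : ℝ) : ℂ)) * ((q:ℂ)/w * (q:ℂ)^n)
          = (q:ℂ) ^ (ek n k + ((n:ℤ)+1)) * w ^ ((k:ℤ) - n - 1) * ((qb q n k : ℝ) : ℂ) := by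
        intro k _
        simp only [zpow_add₀ hQ, zpow_sub₀ hw, zpow_natCast, zpow_one]
        field_simp
      rw [Finset.sum_congr rfl e2]
      rw [Finset.sum_range_succ' (fun k =>
        (q:ℂ) ^ (ek n k + ((n:ℤ)+1)) * w ^ ((k:ℤ) - n - 1) * ((qb q n k : ℝ) : ℂ)) n]
      rw [Finset.sum_range_succ (fun j =>
        (q:ℂ) ^ (ek n j + ((j:ℤ)+1)) * w ^ ((j:ℤ) - n) * ((qb q n (j+1) : ℝ) : ℂ)) n]
      have htop : (q:ℂ) ^ (ek n n + ((n:ℤ)+1)) * w ^ ((n:ℤ) - n) * ((qb q n (n+1) : ℝ) : ℂ) = 0 := by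
        rw [qb_of_gt (Nat.lt_succ_self n)]; simp
      rw [htop, add_zero]
      congr 1
      · refine Finset.sum_congr rfl fun j _ => ?_
        rw [show ek n (j+1) + ((n:ℤ)+1) = ek n j + ((j:ℤ)+1) from by
          rw [ek_succ]; ring]
        rw [show (((j+1:ℕ):ℤ) - n - 1) = (j:ℤ) - n from by push_cast; ring]
      · rw [show ek n 0 + ((n:ℤ)+1) = ek (n+1) 0 from by rw [ek_base0]]
        rw [qb_zero hq0 hq1, qb_zero hq0 hq1]
        rw [show (((0:ℕ):ℤ) - (n:ℤ) - 1) = (0:ℤ) - ((n+1:ℕ):ℤ) from by push_cast; ring]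
    rw [mul_add, mul_one, key2]
    rw [add_assoc]
    norm_num

lemma Jfin (hq0 : 0 < q) (hq1 : q < 1) (hw : w ≠ 0) (m n : ℕ) :
    (∏ j ∈ Finset.range m, (1 + w * (q:ℂ) ^ j)) *
      (∏ j ∈ Finset.range n, (1 + ((q:ℂ)/w) * (q:ℂ) ^ j))
      = ∑ k ∈ Finset.range (m+n+1),
          (q:ℂ) ^ (ek n k) * w ^ ((k:ℤ) - (n:ℤ)) * ((qb q (m+n) k : ℝ) : ℂ) := by
  have hQ : (q:ℂ) ≠ 0 := by
    simpa using Complex.ofReal_ne_zero.mpr hq0.ne'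
  induction m with
  | zero => simpa using Jfin0 hq0 hq1 hw n
  | succ m ih =>
    have hidx : m + 1 + n = (m + n) + 1 := by omega
    calc (∏ j ∈ Finset.range (m+1), (1 + w * (q:ℂ) ^ j)) *
          (∏ j ∈ Finset.range n, (1 + ((q:ℂ)/w) * (q:ℂ) ^ j))
        = ((∏ j ∈ Finset.range m, (1 + w * (q:ℂ) ^ j)) *
            (∏ j ∈ Finset.range n, (1 + ((q:ℂ)/w) * (q:ℂ) ^ j))) * (1 + w * (q:ℂ)^m) := by
          rw [Finset.prod_range_succ]; ring
      _ = (∑ k ∈ Finset.range (m+n+1),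
            (q:ℂ) ^ (ek n k) * w ^ ((k:ℤ) - (n:ℤ)) * ((qb q (m+n) k : ℝ) : ℂ)) * (1 + w * (q:ℂ)^m) := by
          rw [ih]
      _ = ∑ k ∈ Finset.range (m+1+n+1),
            (q:ℂ) ^ (ek n k) * w ^ ((k:ℤ) - (n:ℤ)) * ((qb q (m+1+n) k : ℝ) : ℂ) := ?_
    simp only [hidx]
    set N := m + n with hN
    have e1b : ∀ j, j ≤ N →
        (q:ℂ) ^ (ek n (j+1)) * w ^ (((j+1:ℕ):ℤ) - (n:ℤ)) * (((q ^ (N - j) * qb q N j : ℝ)):ℂ)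
        = (q:ℂ) ^ (ek n j + ((m:ℤ))) * w ^ ((j:ℤ) - n + 1) * ((qb q N j : ℝ) : ℂ) := by
      intro j hjN
      have hcast : ((N - j : ℕ) : ℤ) = (N:ℤ) - j := by omega
      have hek : ek n j + (m:ℤ) = ek n (j+1) + ((N:ℤ) - j) := by
        rw [ek_succ]; omega
      have hw1 : w ^ (((j+1:ℕ):ℤ) - (n:ℤ)) = w ^ ((j:ℤ) - n + 1) := by
        congr 1; push_cast; ring
      rw [hw1, hek, zpow_add₀ hQ, ← hcast, zpow_natCast]
      push_cast
      ring
    have e1 : ∀ j ∈ Finset.range (N+1),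
        (q:ℂ) ^ (ek n (j+1)) * w ^ (((j+1:ℕ):ℤ) - (n:ℤ)) * ((qb q (N+1) (j+1) : ℝ) : ℂ)
        = (q:ℂ) ^ (ek n (j+1)) * w ^ (((j+1:ℕ):ℤ) - (n:ℤ)) * ((qb q N (j+1) : ℝ) : ℂ)
          + (q:ℂ) ^ (ek n j + ((m:ℤ))) * w ^ ((j:ℤ) - n + 1) * ((qb q N j : ℝ) : ℂ) := by
      intro j hj
      have hjN : j ≤ N := by
        have := Finset.mem_range.mp hj; omega
      rw [show ((qb q (N+1) (j+1) : ℝ) : ℂ)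
          = ((qb q N (j+1) : ℝ):ℂ) + (((q ^ (N - j) * qb q N j : ℝ)):ℂ) from by
        rw [pascal1 hq0 hq1 N j]; push_cast; ring]
      rw [mul_add]
      rw [e1b j hjN]
    rw [Finset.sum_range_succ' (fun k =>
      (q:ℂ) ^ (ek n k) * w ^ ((k:ℤ) - (n:ℤ)) * ((qb q (N+1) k : ℝ) : ℂ)) (N+1)]
    rw [Finset.sum_congr rfl e1, Finset.sum_add_distrib]
    have hA : (∑ j ∈ Finset.range (N+1),
          (q:ℂ) ^ (ek n (j+1)) * w ^ (((j+1:ℕ):ℤ) - (n:ℤ)) * ((qb q N (j+1) : ℝ) : ℂ))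
        + (q:ℂ) ^ (ek n 0) * w ^ (((0:ℕ):ℤ) - (n:ℤ)) * ((qb q (N+1) 0 : ℝ) : ℂ)
        = ∑ k ∈ Finset.range (N+1),
          (q:ℂ) ^ (ek n k) * w ^ ((k:ℤ) - (n:ℤ)) * ((qb q N k : ℝ) : ℂ) := by
      rw [qb_zero hq0 hq1]
      rw [show ((q:ℂ) ^ (ek n 0) * w ^ (((0:ℕ):ℤ) - (n:ℤ)) * ((1 : ℝ) : ℂ))
          = (q:ℂ) ^ (ek n 0) * w ^ (((0:ℕ):ℤ) - (n:ℤ)) * ((qb q N 0 : ℝ) : ℂ) from by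
        rw [qb_zero hq0 hq1]]
      rw [← Finset.sum_range_succ' (fun k =>
        (q:ℂ) ^ (ek n k) * w ^ ((k:ℤ) - (n:ℤ)) * ((qb q N k : ℝ) : ℂ)) (N+1)]
      rw [Finset.sum_range_succ (fun k =>
        (q:ℂ) ^ (ek n k) * w ^ ((k:ℤ) - (n:ℤ)) * ((qb q N k : ℝ) : ℂ)) (N+1)]
      rw [qb_of_gt (Nat.lt_succ_self N)]
      simp
    have hB : (∑ j ∈ Finset.range (N+1),
          (q:ℂ) ^ (ek n j + ((m:ℤ))) * w ^ ((j:ℤ) - n + 1) * ((qb q N j : ℝ) : ℂ))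
        = (∑ k ∈ Finset.range (N+1),
            (q:ℂ) ^ (ek n k) * w ^ ((k:ℤ) - (n:ℤ)) * ((qb q N k : ℝ) : ℂ)) * (w * (q:ℂ)^m) := by
      rw [Finset.sum_mul]
      refine Finset.sum_congr rfl fun j _ => ?_
      rw [zpow_add₀ hQ, zpow_add₀ hw, zpow_one, zpow_natCast]
      ring
    linear_combination -hA - hB


-- ================= Part E : limits =================

lemma qb_nonneg (hq0 : 0 < q) (hq1 : q < 1) (N k : ℕ) : 0 ≤ qb q N k := by
  unfold qb
  split
  · have h1 := Fq_pos hq0 hq1 N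
    have h2 := Fq_pos hq0 hq1 k
    have h3 := Fq_pos hq0 hq1 (N - k)
    positivity
  · exact le_refl _

lemma qb_le_B (hq0 : 0 < q) (hq1 : q < 1) (N k : ℕ) :
    qb q N k ≤ (Lq q * Lq q)⁻¹ := by
  have hL := Lq_pos hq0 hq1
  unfold qb
  split
  · rw [show (Lq q * Lq q)⁻¹ = 1 / (Lq q * Lq q) from (one_div _).symm]
    refine div_le_div₀ (by norm_num) (Fq_le_one hq0 hq1 N) (by positivity) ?_
    exact mul_le_mul (Lq_le hq0 hq1 k) (Lq_le hq0 hq1 (N - k)) hL.le (Fq_pos hq0 hq1 k).le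
  · positivity

noncomputable def qbz (q : ℝ) (M : ℕ) (r : ℤ) : ℝ :=
  if 0 ≤ r then qb q M r.toNat else 0

lemma qbz_nonneg (hq0 : 0 < q) (hq1 : q < 1) (M : ℕ) (r : ℤ) : 0 ≤ qbz q M r := by
  unfold qbz; split
  · exact qb_nonneg hq0 hq1 _ _
  · exact le_refl _

lemma qbz_le_B (hq0 : 0 < q) (hq1 : q < 1) (M : ℕ) (r : ℤ) :
    qbz q M r ≤ (Lq q * Lq q)⁻¹ := by
  have hL := Lq_pos hq0 hq1
  unfold qbz; split
  · exact qb_le_B hq0 hq1 _ _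
  · positivity

-- the summand over ℤ
noncomputable def jterm (q : ℝ) (w : ℂ) (l : ℤ) : ℂ := (q:ℂ) ^ (l * (l - 1) / 2) * w ^ l

noncomputable def fN (q : ℝ) (w : ℂ) (N : ℕ) (l : ℤ) : ℂ :=
  jterm q w l * ((qbz q (N+N) ((N:ℤ) + l) : ℝ) : ℂ)

lemma fN_tsum_eq (hq0 : 0 < q) (hq1 : q < 1) (hw : w ≠ 0) (N : ℕ) :
    ∑' l : ℤ, fN q w N l
      = ∑ k ∈ Finset.range (N+N+1),
          (q:ℂ) ^ (ek N k) * w ^ ((k:ℤ) - (N:ℤ)) * ((qb q (N+N) k : ℝ) : ℂ) := by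
  classical
  have hinj : Function.Injective (fun k : ℕ => (k:ℤ) - N) := by
    intro a b hab; simpa using hab
  set s : Finset ℤ := (Finset.range (N+N+1)).map ⟨fun k : ℕ => (k:ℤ) - N, hinj⟩ with hs
  have hzero : ∀ l ∉ s, fN q w N l = 0 := by
    intro l hl
    unfold fN qbz
    rcases le_or_gt 0 ((N:ℤ) + l) with h0 | h0
    · rcases le_or_gt l (N:ℤ) with h1 | h1
      · exfalso
        apply hl
        rw [hs, Finset.mem_map]
        refine ⟨((N:ℤ) + l).toNat, ?_, ?_⟩
        · rw [Finset.mem_range]; omega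
        · simp only [Function.Embedding.coeFn_mk]; omega
      · rw [if_pos h0, qb_of_gt (by omega : N + N < ((N:ℤ) + l).toNat)]
        simp
    · rw [if_neg (by omega)]
      simp
  rw [tsum_eq_sum hzero, hs, Finset.sum_map]
  refine Finset.sum_congr rfl fun k hk => ?_
  have hk' : k < N + N + 1 := Finset.mem_range.mp hk
  simp only [Function.Embedding.coeFn_mk]
  unfold fN jterm qbz ek
  rw [if_pos (by omega : (0:ℤ) ≤ (N:ℤ) + ((k:ℤ) - N))]
  rw [show ((N:ℤ) + ((k:ℤ) - N)).toNat = k from by omega]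

-- summability of the dominating function
lemma summable_jnorm (hq0 : 0 < q) (hq1 : q < 1) (hw : w ≠ 0) :
    Summable (fun l : ℤ => q ^ (l * (l - 1) / 2) * ‖w‖ ^ l) := by
  have hq : (q:ℝ) ≠ 0 := hq0.ne'
  have hwn : (0:ℝ) < ‖w‖ := norm_pos_iff.mpr hw
  have hpos : ∀ l : ℤ, 0 < q ^ (l * (l - 1) / 2) * ‖w‖ ^ l := by
    intro l
    have := zpow_pos hq0 (l * (l - 1) / 2)
    have := zpow_pos hwn l
    positivity
  refine Summable.of_nat_of_neg ?_ ?_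
  · -- ratio test
    refine summable_of_ratio_norm_eventually_le (r := 1/2) (by norm_num) ?_
    have h0 : Tendsto (fun n : ℕ => q ^ n * ‖w‖) atTop (𝓝 (0 * ‖w‖)) :=
      (tendsto_pow_atTop_nhds_zero_of_lt_one hq0.le hq1).mul_const _
    rw [zero_mul] at h0
    filter_upwards [h0.eventually_le_const (by norm_num : (0:ℝ) < 1/2)] with n hn
    have hstep : ((n:ℤ)+1) * (((n:ℤ)+1) - 1) / 2 = (n:ℤ) * ((n:ℤ) - 1) / 2 + n := by
      rw [show ((n:ℤ)+1) * (((n:ℤ)+1) - 1) = ((n:ℤ)+1) * (n:ℤ) from by ring]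
      exact half_succ n
    have hEq : q ^ (((n+1:ℕ):ℤ) * (((n+1:ℕ):ℤ) - 1) / 2) * ‖w‖ ^ ((n+1:ℕ):ℤ)
        = (q ^ ((n:ℤ) * ((n:ℤ) - 1) / 2) * ‖w‖ ^ (n:ℤ)) * (q ^ n * ‖w‖) := by
      push_cast
      rw [hstep, zpow_add₀ hq, zpow_add₀ hwn.ne', zpow_natCast, zpow_one]
      ring
    rw [Real.norm_of_nonneg (hpos _).le, Real.norm_of_nonneg (hpos _).le, hEq]
    calc q ^ ((n:ℤ) * ((n:ℤ) - 1) / 2) * ‖w‖ ^ (n:ℤ) * (q ^ n * ‖w‖)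
        ≤ q ^ ((n:ℤ) * ((n:ℤ) - 1) / 2) * ‖w‖ ^ (n:ℤ) * (1/2) := by
          refine mul_le_mul_of_nonneg_left hn (le_of_lt ?_)
          exact mul_pos (zpow_pos hq0 _) (zpow_pos hwn _)
      _ = 1/2 * (q ^ ((n:ℤ) * ((n:ℤ) - 1) / 2) * ‖w‖ ^ (n:ℤ)) := by ring
  · refine summable_of_ratio_norm_eventually_le (r := 1/2) (by norm_num) ?_
    have h0 : Tendsto (fun n : ℕ => q ^ (n+1) * ‖w‖⁻¹) atTop (𝓝 (0 * ‖w‖⁻¹)) := by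
      refine Tendsto.mul_const _ ?_
      exact (tendsto_pow_atTop_nhds_zero_of_lt_one hq0.le hq1).comp (tendsto_add_atTop_nat 1)
    rw [zero_mul] at h0
    filter_upwards [h0.eventually_le_const (by norm_num : (0:ℝ) < 1/2)] with n hn
    have hstep : (-((n:ℤ)+1)) * ((-((n:ℤ)+1)) - 1) / 2
        = (-(n:ℤ)) * ((-(n:ℤ)) - 1) / 2 + (n + 1) := by
      have h := half_succ (-(n:ℤ) - 1)
      rw [show (-((n:ℤ)+1)) * ((-((n:ℤ)+1)) - 1) = (-(n:ℤ)-1) * ((-(n:ℤ)-1) - 1) from by ring,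
        show (-(n:ℤ)) * ((-(n:ℤ)) - 1) = ((-(n:ℤ)-1)+1) * (-(n:ℤ)-1) from by ring]
      omega
    have hEq : q ^ ((-((n+1:ℕ):ℤ)) * ((-((n+1:ℕ):ℤ)) - 1) / 2) * ‖w‖ ^ (-((n+1:ℕ):ℤ))
        = (q ^ ((-(n:ℤ)) * ((-(n:ℤ)) - 1) / 2) * ‖w‖ ^ (-(n:ℤ))) * (q ^ (n+1) * ‖w‖⁻¹) := by
      push_cast
      rw [hstep, zpow_add₀ hq]
      rw [show (-((n:ℤ)+1)) = (-(n:ℤ)) + (-1) from by ring, zpow_add₀ hwn.ne']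
      rw [show ((n:ℤ)+1) = ((n+1:ℕ):ℤ) from by push_cast; ring, zpow_natCast]
      simp [zpow_neg]
      ring
    rw [Real.norm_of_nonneg (hpos _).le, Real.norm_of_nonneg (hpos _).le, hEq]
    calc (q ^ ((-(n:ℤ)) * ((-(n:ℤ)) - 1) / 2) * ‖w‖ ^ (-(n:ℤ))) * (q ^ (n+1) * ‖w‖⁻¹)
        ≤ (q ^ ((-(n:ℤ)) * ((-(n:ℤ)) - 1) / 2) * ‖w‖ ^ (-(n:ℤ))) * (1/2) := by
          refine mul_le_mul_of_nonneg_left hn (le_of_lt ?_)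
          exact mul_pos (zpow_pos hq0 _) (zpow_pos hwn _)
      _ = 1/2 * (q ^ ((-(n:ℤ)) * ((-(n:ℤ)) - 1) / 2) * ‖w‖ ^ (-(n:ℤ))) := by ring

lemma tendsto_qbz (hq0 : 0 < q) (hq1 : q < 1) (l : ℤ) :
    Tendsto (fun N : ℕ => qbz q (N+N) ((N:ℤ) + l)) atTop (𝓝 (Lq q)⁻¹) := by
  have hL := Lq_pos hq0 hq1
  have hFq := tendsto_Fq hq0 hq1
  have hta : Tendsto (fun N : ℕ => ((N:ℤ) + l).toNat) atTop atTop := by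
    refine tendsto_atTop_mono' atTop ?_ (tendsto_sub_atTop_nat l.natAbs)
    filter_upwards [eventually_ge_atTop l.natAbs] with N hN
    omega
  have htb : Tendsto (fun N : ℕ => (N+N) - ((N:ℤ) + l).toNat) atTop atTop := by
    refine tendsto_atTop_mono' atTop ?_ (tendsto_sub_atTop_nat l.natAbs)
    filter_upwards [eventually_ge_atTop l.natAbs] with N hN
    omega
  have h2 : Tendsto (fun N : ℕ => N + N) atTop atTop :=
    tendsto_atTop_mono (fun N => Nat.le_add_left N N) tendsto_id
  have hnum : Tendsto (fun N : ℕ =>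
      Fq q (N+N) / (Fq q (((N:ℤ) + l).toNat) * Fq q ((N+N) - ((N:ℤ) + l).toNat)))
      atTop (𝓝 (Lq q / (Lq q * Lq q))) :=
    (hFq.comp h2).div ((hFq.comp hta).mul (hFq.comp htb)) (by positivity)
  have hLval : Lq q / (Lq q * Lq q) = (Lq q)⁻¹ := by field_simp
  rw [hLval] at hnum
  refine hnum.congr' ?_
  filter_upwards [eventually_ge_atTop l.natAbs] with N hN
  unfold qbz
  rw [if_pos (by omega : (0:ℤ) ≤ (N:ℤ) + l)]
  rw [qb_eq (by omega : ((N:ℤ)+l).toNat ≤ N+N)]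

lemma tendsto_fN (hq0 : 0 < q) (hq1 : q < 1) (l : ℤ) :
    Tendsto (fun N : ℕ => fN q w N l) atTop
      (𝓝 (jterm q w l * ((((Lq q)⁻¹ : ℝ)) : ℂ))) := by
  have h2 : Tendsto (fun N : ℕ => ((qbz q (N+N) ((N:ℤ)+l) : ℝ) : ℂ)) atTop
      (𝓝 ((((Lq q)⁻¹ : ℝ)) : ℂ)) :=
    (Complex.continuous_ofReal.tendsto _).comp (tendsto_qbz hq0 hq1 l)
  exact h2.const_mul _

lemma fN_bound (hq0 : 0 < q) (hq1 : q < 1) (hw : w ≠ 0) (N : ℕ) (l : ℤ) :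
    ‖fN q w N l‖ ≤ (Lq q * Lq q)⁻¹ * (q ^ (l * (l - 1) / 2) * ‖w‖ ^ l) := by
  have hL := Lq_pos hq0 hq1
  unfold fN jterm
  rw [norm_mul, norm_mul, norm_zpow, norm_zpow]
  have h1 : ‖(q:ℂ)‖ = q := by
    simp [abs_of_pos hq0]
  have h2 : ‖(((qbz q (N+N) ((N:ℤ) + l) : ℝ)) : ℂ)‖ = qbz q (N+N) ((N:ℤ) + l) := by
    simp [abs_of_nonneg (qbz_nonneg hq0 hq1 _ _)]
  rw [h1, h2]
  have hb := qbz_le_B hq0 hq1 (N+N) ((N:ℤ) + l)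
  have hpos : (0:ℝ) < q ^ (l * (l - 1) / 2) * ‖w‖ ^ l :=
    mul_pos (zpow_pos hq0 _) (zpow_pos (norm_pos_iff.mpr hw) _)
  calc q ^ (l * (l - 1) / 2) * ‖w‖ ^ l * qbz q (N+N) ((N:ℤ) + l)
      ≤ q ^ (l * (l - 1) / 2) * ‖w‖ ^ l * (Lq q * Lq q)⁻¹ :=
        mul_le_mul_of_nonneg_left hb hpos.le
    _ = (Lq q * Lq q)⁻¹ * (q ^ (l * (l - 1) / 2) * ‖w‖ ^ l) := by ring

end JTP

open scoped BigOperators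
open Finset Filter Topology JTP

/-- Jacobi triple product: for 0 < q < 1 and w ≠ 0,
(-w;q)_∞ · (-q/w;q)_∞ · (q;q)_∞ = ∑_{k∈ℤ} q^{k(k-1)/2} wᵏ. -/
theorem stmt4 (q : ℝ) (hq0 : 0 < q) (hq1 : q < 1) (w : ℂ) (hw : w ≠ 0) :
    (∏' k : ℕ, (1 + w * (q : ℂ) ^ k)) * (∏' k : ℕ, (1 + ((q : ℂ) / w) * (q : ℂ) ^ k)) *
      (∏' k : ℕ, (1 - (q : ℂ) ^ (k + 1))) =
    ∑' k : ℤ, (q : ℂ) ^ (k * (k - 1) / 2) * w ^ k := by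
  have hQ : (q:ℂ) ≠ 0 := by
    simpa using Complex.ofReal_ne_zero.mpr hq0.ne'
  have hL := Lq_pos hq0 hq1
  have hLne : ((Lq q : ℝ) : ℂ) ≠ 0 := by
    simpa using Complex.ofReal_ne_zero.mpr hL.ne'
  have habsq : ‖(q:ℂ)‖ = q := by
    simp [abs_of_pos hq0]
  -- summability for the three products
  have hgeom : Summable (fun k : ℕ => q ^ k) := summable_geometric_of_lt_one hq0.le hq1
  have hs1 : Summable (fun k : ℕ => ‖w * (q:ℂ)^k‖) := by
    have he : (fun k : ℕ => ‖w * (q:ℂ)^k‖) = fun k => ‖w‖ * q ^ k := by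
      funext k; rw [norm_mul, norm_pow, habsq]
    rw [he]; exact hgeom.mul_left _
  have hs2 : Summable (fun k : ℕ => ‖((q:ℂ)/w) * (q:ℂ)^k‖) := by
    have he : (fun k : ℕ => ‖((q:ℂ)/w) * (q:ℂ)^k‖) = fun k => ‖(q:ℂ)/w‖ * q ^ k := by
      funext k; rw [norm_mul, norm_pow, habsq]
    rw [he]; exact hgeom.mul_left _
  have hs3 : Summable (fun k : ℕ => ‖-((q:ℂ)^(k+1))‖) := by
    have he : (fun k : ℕ => ‖-((q:ℂ)^(k+1))‖) = fun k => q ^ k * q := by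
      funext k; rw [norm_neg, norm_pow, habsq, pow_succ]
    rw [he]; exact hgeom.mul_right _
  have t1 := tendsto_prod_range (fun k => w * (q:ℂ)^k) hs1
  have t2 := tendsto_prod_range (fun k => ((q:ℂ)/w) * (q:ℂ)^k) hs2
  have t3 := tendsto_prod_range (fun k => -((q:ℂ)^(k+1))) hs3
  -- third product equals Lq
  have hcast : ∀ N : ℕ, ∏ j ∈ Finset.range N, (1 + -((q:ℂ)^(j+1))) = ((Fq q N : ℝ) : ℂ) := by
    intro N
    rw [Fq]
    push_cast
    exact Finset.prod_congr rfl fun j _ => by ring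
  have t3' : Tendsto (fun N => ∏ j ∈ Finset.range N, (1 + -((q:ℂ)^(j+1)))) atTop
      (𝓝 ((Lq q : ℝ) : ℂ)) := by
    refine Tendsto.congr (fun N => (hcast N).symm) ?_
    exact (Complex.continuous_ofReal.tendsto _).comp (tendsto_Fq hq0 hq1)
  have hP3 : (∏' k : ℕ, (1 - (q:ℂ)^(k+1))) = ((Lq q : ℝ) : ℂ) := by
    have h1 : (∏' k : ℕ, (1 - (q:ℂ)^(k+1))) = ∏' k : ℕ, (1 + -((q:ℂ)^(k+1))) :=
      tprod_congr fun k => by ring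
    rw [h1]
    exact tendsto_nhds_unique t3 t3'
  -- combine products 1 and 2
  have hTfin : ∀ N : ℕ,
      (∏ j ∈ Finset.range N, (1 + w * (q:ℂ)^j)) *
        (∏ j ∈ Finset.range N, (1 + ((q:ℂ)/w) * (q:ℂ)^j)) = ∑' l : ℤ, fN q w N l := by
    intro N
    rw [fN_tsum_eq hq0 hq1 hw N]
    exact Jfin hq0 hq1 hw N N
  have htan : Tendsto (fun N => ∑' l : ℤ, fN q w N l) atTop
      (𝓝 (∑' l : ℤ, jterm q w l * ((((Lq q)⁻¹ : ℝ)) : ℂ))) := by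
    refine tendsto_tsum_of_dominated_convergence
      ((summable_jnorm hq0 hq1 hw).mul_left ((Lq q * Lq q)⁻¹))
      (fun l => tendsto_fN hq0 hq1 l) ?_
    exact Filter.Eventually.of_forall (fun N l => fN_bound hq0 hq1 hw N l)
  have hlhs : Tendsto (fun N => ∑' l : ℤ, fN q w N l) atTop
      (𝓝 ((∏' k : ℕ, (1 + w * (q:ℂ)^k)) * (∏' k : ℕ, (1 + ((q:ℂ)/w) * (q:ℂ)^k)))) := by
    refine Tendsto.congr (fun N => hTfin N) (t1.mul t2)
  have h12 : (∏' k : ℕ, (1 + w * (q:ℂ)^k)) * (∏' k : ℕ, (1 + ((q:ℂ)/w) * (q:ℂ)^k))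
      = ∑' l : ℤ, jterm q w l * ((((Lq q)⁻¹ : ℝ)) : ℂ) :=
    tendsto_nhds_unique hlhs htan
  rw [hP3, h12, tsum_mul_right]
  have hfin : ((((Lq q)⁻¹ : ℝ)) : ℂ) * ((Lq q : ℝ) : ℂ) = 1 := by
    rw [← Complex.ofReal_mul, inv_mul_cancel₀ hL.ne']
    simp
  rw [mul_assoc, hfin, mul_one]
  exact tsum_congr fun l => rfl
end

section
/- Let 0 < q < 1, H a Hilbert space with orthonormal basis {φ_k}, M(q) the diagonal operator with eigenvalues q^k, K(z;q) the diagonal operator with eigenvalues q^k z/(1+q^k z), and P any orthogonal projection on H. Then for all z ∉ {-q^{-k}}, the operator identity (I + zM(q))(I − K(z;q)(I−P)) = I + zM(q)P holds, and consequently det(I + zM(q)P) = (-z;q)_∞ · det(I − K(z;q)(I−P)). -/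
open Filter Topology

set_option maxHeartbeats 1000000 in
/-- with M(q)φₖ = qᵏφₖ, K(z;q)φₖ = (qᵏz)/(1+qᵏz)φₖ and P an orthogonal
projection, for z avoiding the poles {-q^{-k}} one has the operator identity
(I + zM(q))(I − K(z;q)(I−P)) = I + zM(q)P, and consequently
det(I + zM(q)P) = (-z;q)_∞ · det(I − K(z;q)(I−P)), where the Fredholm determinants
are the limits of the determinants of the N×N principal minors in the basis {φₖ}. -/
theorem stmt11 {H : Type*} [NormedAddCommGroup H] [InnerProductSpace ℂ H]
    [CompleteSpace H] (q : ℝ) (hq0 : 0 < q) (hq1 : q < 1)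
    (φ : HilbertBasis ℕ ℂ H) (z : ℂ) (hz : ∀ k : ℕ, z ≠ -((q : ℂ) ^ k)⁻¹)
    (M K P : H →L[ℂ] H)
    (hM : ∀ j : ℕ, M (φ j) = (q : ℂ) ^ j • φ j)
    (hK : ∀ j : ℕ, K (φ j) = ((q : ℂ) ^ j * z / (1 + (q : ℂ) ^ j * z)) • φ j)
    (hP : P * P = P) (hPsa : IsSelfAdjoint P) :
    (1 + z • M) * (1 - K * (1 - P)) = 1 + z • (M * P) ∧
    ∀ d : ℂ,
      Tendsto (fun N : ℕ => Matrix.det (Matrix.of fun i j : Fin N =>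
          φ.repr ((1 - K * (1 - P)) (φ (j : ℕ))) (i : ℕ))) atTop (𝓝 d) →
      Tendsto (fun N : ℕ => Matrix.det (Matrix.of fun i j : Fin N =>
          φ.repr ((1 + z • (M * P)) (φ (j : ℕ))) (i : ℕ))) atTop
        (𝓝 ((∏' k : ℕ, (1 + (q : ℂ) ^ k * z)) * d)) := by
  have hdense : Dense (Submodule.span ℂ (Set.range (φ : ℕ → H)) : Set H) :=
    Submodule.dense_iff_topologicalClosure_eq_top.mpr φ.dense_span
  have hqC : (q : ℂ) ≠ 0 := by exact_mod_cast hq0.ne'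
  have hne : ∀ k : ℕ, (1 + (q : ℂ) ^ k * z) ≠ 0 := by
    intro k h
    apply hz k
    have hpow : ((q : ℂ) ^ k) ≠ 0 := pow_ne_zero _ hqC
    have h1 : z = -1 / (q : ℂ) ^ k := by
      rw [eq_div_iff hpow]; linear_combination h
    rw [h1, neg_div, one_div]
  -- key algebraic identity: K + (z • M) * K = z • M
  have key : K + (z • M) * K = z • M := by
    apply ContinuousLinearMap.ext_on hdense
    rintro x ⟨j, rfl⟩
    simp only [ContinuousLinearMap.add_apply, ContinuousLinearMap.mul_apply,
      ContinuousLinearMap.smul_apply, hK, hM, map_smul, smul_smul]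
    rw [← add_smul]
    congr 1
    field_simp [hne j]
  have part1 : (1 + z • M) * (1 - K * (1 - P)) = 1 + z • (M * P) := by
    have h2 : (1 + z • M) * (1 - K * (1 - P)) =
        1 + z • M - (K + (z • M) * K) * (1 - P) := by noncomm_ring
    rw [h2, key]
    have : z • (M * P) = (z • M) * P := by rw [smul_mul_assoc]
    rw [this]
    noncomm_ring
  refine ⟨part1, ?_⟩
  intro d hd
  -- diagonal action of (1 + z • M) on coordinates
  have hdiag : ∀ (i : ℕ) (x : H),
      φ.repr ((1 + z • M) x) i = (1 + (q : ℂ) ^ i * z) * φ.repr x i := by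
    intro i
    have hCLM : (innerSL ℂ (φ i)).comp (1 + z • M) =
        (1 + (q : ℂ) ^ i * z) • innerSL ℂ (φ i) := by
      apply ContinuousLinearMap.ext_on hdense
      rintro x ⟨j, rfl⟩
      simp only [ContinuousLinearMap.comp_apply, ContinuousLinearMap.add_apply,
        ContinuousLinearMap.smul_apply, ContinuousLinearMap.one_apply, hM,
        innerSL_apply_apply, inner_add_right, inner_smul_right, smul_smul]
      have hortho := orthonormal_iff_ite.mp φ.orthonormal i j
      rw [hortho]
      rcases eq_or_ne i j with rfl | hij
      · simp
        ring
      · simp [hij]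
    intro x
    have := ContinuousLinearMap.ext_iff.mp hCLM x
    simp only [ContinuousLinearMap.comp_apply, ContinuousLinearMap.smul_apply,
      innerSL_apply_apply, smul_eq_mul] at this
    rw [φ.repr_apply_apply, φ.repr_apply_apply, this]
  -- matrix identity for the minors
  have hmat : ∀ N : ℕ,
      (Matrix.of fun i j : Fin N => φ.repr ((1 + z • (M * P)) (φ (j : ℕ))) (i : ℕ)) =
      (Matrix.diagonal fun i : Fin N => (1 + (q : ℂ) ^ (i : ℕ) * z)) *
      (Matrix.of fun i j : Fin N => φ.repr ((1 - K * (1 - P)) (φ (j : ℕ))) (i : ℕ)) := by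
    intro N
    ext i j
    rw [Matrix.diagonal_mul]
    simp only [Matrix.of_apply]
    rw [← hdiag]
    congr 1
    rw [← part1]
    rfl
  -- multipliability
  have hlog : Summable fun k : ℕ => Complex.log (1 + (q : ℂ) ^ k * z) := by
    apply Summable.of_norm_bounded_eventually_nat
      (g := fun k => ((3 / 2 : ℝ) * ‖z‖) * q ^ k)
    · exact (summable_geometric_of_lt_one hq0.le hq1).mul_left _
    · have htend : Tendsto (fun k : ℕ => ‖(q : ℂ) ^ k * z‖) atTop (𝓝 0) := by
        have : Tendsto (fun k : ℕ => q ^ k * ‖z‖) atTop (𝓝 (0 * ‖z‖)) :=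
          (tendsto_pow_atTop_nhds_zero_of_lt_one hq0.le hq1).mul_const _
        simpa [norm_mul, norm_pow, abs_of_pos hq0] using this
      filter_upwards [htend.eventually_le_const (by norm_num : (0:ℝ) < 1/2)] with k hk
      calc ‖Complex.log (1 + (q : ℂ) ^ k * z)‖ ≤ 3 / 2 * ‖(q : ℂ) ^ k * z‖ :=
            Complex.norm_log_one_add_half_le_self hk
        _ = (3 / 2 * ‖z‖) * q ^ k := by
            simp only [norm_mul, norm_pow, Complex.norm_real, Real.norm_eq_abs,
              abs_of_pos hq0]
            ring
  have hmult : Multipliable fun k : ℕ => (1 + (q : ℂ) ^ k * z) :=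
    Complex.multipliable_of_summable_log hlog
  have hprod : Tendsto (fun N : ℕ => ∏ i ∈ Finset.range N, (1 + (q : ℂ) ^ i * z)) atTop
      (𝓝 (∏' k : ℕ, (1 + (q : ℂ) ^ k * z))) := hmult.hasProd.tendsto_prod_nat
  refine (hprod.mul hd).congr fun N => ?_
  rw [hmat N, Matrix.det_mul, Matrix.det_diagonal, ← Fin.prod_univ_eq_prod_range]
end
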